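/- Let c ∈ (0,1] and γ be reals with γ ≥ 1 − ln c (note this forces γ ≥ 1). Then for every real α with 0 ≤ α < 1/γ, (1−α)·ln((1−α)/(c·(1−γα))) ≥ ln(1/c). -/
import Mathlib


/-- Lower bound on the objective `(1−α)·ln((1−α)/(c(1−γα)))` on `[0, 1/γ)`. -/
theorem objective_lower_bound
    (c γ α : ℝ) (hc0 : 0 < c) (hc1 : c ≤ 1) (hγ : 1 - Real.log c ≤ γ)
    (hα0 : 0 ≤ α) (hα1 : α < 1 / γ) :
    Real.log (1 / c) ≤ (1 - α) * Real.log ((1 - α) / (c * (1 - γ * α))) := by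
  have hlc : Real.log c ≤ 0 := Real.log_nonpos hc0.le hc1
  have hγ1 : 1 ≤ γ := by linarith
  have hγ0 : 0 < γ := by linarith
  have hα1' : α < 1 := hα1.trans_le ((div_le_one hγ0).mpr hγ1)
  have h1α : 0 < 1 - α := by linarith
  have hγα : 0 < 1 - γ * α := by
    have := (lt_div_iff₀ hγ0).mp hα1
    nlinarith
  set x : ℝ := (1 - α) / (1 - γ * α) with hxdef
  have hx : 0 < x := div_pos h1α hγα
  have hlog : Real.log ((1 - α) / (c * (1 - γ * α))) = Real.log x - Real.log c := by
    rw [show (1 - α) / (c * (1 - γ * α)) = x / c by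
      rw [hxdef, div_div, mul_comm]]
    exact Real.log_div hx.ne' hc0.ne'
  have key : 1 - x⁻¹ ≤ Real.log x := by
    have h := Real.log_le_sub_one_of_pos (inv_pos.mpr hx)
    rw [Real.log_inv] at h
    linarith
  have hxinv : x⁻¹ = (1 - γ * α) / (1 - α) := by rw [hxdef, inv_div]
  have h2 : α * (γ - 1) ≤ (1 - α) * Real.log x := by
    have h3 : (1 - α) * (1 - x⁻¹) ≤ (1 - α) * Real.log x :=
      mul_le_mul_of_nonneg_left key h1α.le
    have h4 : (1 - α) * (1 - x⁻¹) = α * (γ - 1) := by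
      rw [hxinv]; field_simp; ring
    linarith
  have h5 : α * (-Real.log c) ≤ α * (γ - 1) :=
    mul_le_mul_of_nonneg_left (by linarith) hα0
  rw [one_div, Real.log_inv, hlog]
  nlinarith [h2, h5]
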